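/- arXiv:2209.02001 — 4 statements merged into one kernel-verified Lean document; each statement's English description precedes it below -/
import Mathlib

section
/- Let $\mu$ be a probability measure on a measurable space $\Omega$, and let $S, W, T$ be disjoint measurable sets with $\mu(S) > 0$. Let $(\vartheta_k)_{k \ge 0}$ be a Markov chain with stationary (invariant) distribution $\mu$, initialised from the conditional distribution $\mu(\cdot \mid S)$. Suppose every path from $S$ to $T$ must pass through $W$ in the sense that $\tau_T \ge \tau_W$ almost surely, where $\tau_A = \inf\{k : \vartheta_k \in A\}$. Then for every $K \ge 1$, $\Pr(\tau_W \le K) \le K \,\mu(W)/\mu(S)$. -/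
open MeasureTheory ProbabilityTheory

/-- Bottleneck hitting-time bound: for a Markov chain with invariant distribution `μ`,
started from `μ(·|S)`, whose paths from `S` to `T` must pass through `W`
(`τ_T ≥ τ_W` a.s.), the hitting time of `W` satisfies `Pr(τ_W ≤ K) ≤ K μ(W)/μ(S)`.
The event `{τ_W ≤ K}` is `{∃ k ≤ K, ϑ_k ∈ W}`. -/
theorem stmt_0 {E Ω : Type*} [MeasurableSpace E] [MeasurableSpace Ω]
    (μ : Measure E) [IsProbabilityMeasure μ]
    (S W T : Set E) (hSm : MeasurableSet S) (hWm : MeasurableSet W) (hTm : MeasurableSet T)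
    (hSW : Disjoint S W) (hST : Disjoint S T) (hWT : Disjoint W T)
    (hμS : 0 < μ S)
    (P : Measure Ω) [IsProbabilityMeasure P]
    (ϑ : ℕ → Ω → E) (hϑ : ∀ k, Measurable (ϑ k))
    (κ : Kernel E E) [IsMarkovKernel κ]
    (hinv : μ.bind (fun x => κ x) = μ)
    (hinit : Measure.map (ϑ 0) P = ProbabilityTheory.cond μ S)
    (hstep : ∀ k, Measure.map (ϑ (k + 1)) P = (Measure.map (ϑ k) P).bind (fun x => κ x))
    (hpath : ∀ᵐ ω ∂P, ∀ k, ϑ k ω ∈ T → ∃ j ≤ k, ϑ j ω ∈ W)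
    (K : ℕ) (hK : 1 ≤ K) :
    P {ω | ∃ k ≤ K, ϑ k ω ∈ W} ≤ K * μ W / μ S := by
  have hS0 : μ S ≠ 0 := hμS.ne'
  -- Law of ϑ k is dominated by (μ S)⁻¹ • μ
  have hdom : ∀ k, Measure.map (ϑ k) P ≤ (μ S)⁻¹ • μ := by
    intro k
    induction k with
    | zero =>
        rw [hinit, ProbabilityTheory.cond]
        refine Measure.le_iff.mpr (fun s hs => ?_)
        simp only [Measure.smul_apply, smul_eq_mul]
        exact mul_le_mul_right (Measure.restrict_apply_le _ _) _
    | succ k ih =>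
        rw [hstep k]
        have h1 : (Measure.map (ϑ k) P).bind (fun x => κ x)
            ≤ ((μ S)⁻¹ • μ).bind (fun x => κ x) := by
          refine Measure.le_iff.mpr (fun s hs => ?_)
          rw [Measure.bind_apply hs (κ.measurable.aemeasurable), Measure.bind_apply hs (κ.measurable.aemeasurable)]
          exact lintegral_mono' ih le_rfl
        have h2 : ((μ S)⁻¹ • μ).bind (fun x => κ x) = (μ S)⁻¹ • μ := by
          refine Measure.ext (fun s hs => ?_)
          rw [Measure.bind_apply hs (κ.measurable.aemeasurable), Measure.smul_apply, smul_eq_mul,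
            lintegral_smul_measure, ← Measure.bind_apply hs (κ.measurable.aemeasurable), hinv, smul_eq_mul]
        exact h2 ▸ h1
  have hlaw : ∀ k, P (ϑ k ⁻¹' W) ≤ (μ S)⁻¹ * μ W := by
    intro k
    rw [← Measure.map_apply (hϑ k) hWm]
    exact (hdom k W).trans_eq (by simp [Measure.smul_apply])
  have hzero : P (ϑ 0 ⁻¹' W) = 0 := by
    rw [← Measure.map_apply (hϑ 0) hWm, hinit, ProbabilityTheory.cond_apply hSm,
      Set.disjoint_iff_inter_eq_empty.mp hSW]
    simp
  have hset : {ω | ∃ k ≤ K, ϑ k ω ∈ W} = ⋃ k ∈ Finset.range (K + 1), ϑ k ⁻¹' W := by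
    ext ω
    simp [Nat.lt_succ_iff]
  rw [hset]
  calc P (⋃ k ∈ Finset.range (K + 1), ϑ k ⁻¹' W)
      ≤ ∑ k ∈ Finset.range (K + 1), P (ϑ k ⁻¹' W) :=
        measure_biUnion_finset_le _ _
    _ = ∑ k ∈ Finset.range K, P (ϑ (k + 1) ⁻¹' W) + P (ϑ 0 ⁻¹' W) :=
        Finset.sum_range_succ' _ _
    _ = ∑ k ∈ Finset.range K, P (ϑ (k + 1) ⁻¹' W) := by rw [hzero, add_zero]
    _ ≤ ∑ _k ∈ Finset.range K, (μ S)⁻¹ * μ W :=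
        Finset.sum_le_sum (fun k _ => hlaw (k + 1))
    _ = K * ((μ S)⁻¹ * μ W) := by rw [Finset.sum_const, Finset.card_range, nsmul_eq_mul]
    _ = K * μ W / μ S := by rw [div_eq_mul_inv]; ring
end

section
/- Let $\Pi = \mathcal{N}(0, \mathrm{Id}_D/D)$ be the isotropic Gaussian measure on $\mathbb{R}^D$ with covariance $\mathrm{Id}_D/D$. Fix $a \in (0,1)$. Then there exists $D_0(a)$ such that for all $D \ge D_0(a)$ and all $z \in (0, 1-a)$, $-\frac{1}{D} \log \Pi(\{\theta : \|\theta\|_2 \le z\}) \ge \frac{1}{2}\left(\frac{z^2}{2} - \log z - \frac{1}{2}\right)$. -/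
open MeasureTheory ProbabilityTheory Real

lemma oneD_aux (D : ℕ) (hD : 1 ≤ D) (z : ℝ) (hz : 0 < z) :
    ∫ x, rexp (-(((D:ℝ) * (1 - z^2)) / (2 * z^2)) * x^2)
      ∂(gaussianReal 0 (D:NNReal)⁻¹) = z := by
  have hD0 : (0:ℝ) < D := by exact_mod_cast hD
  have hv : ((D:NNReal))⁻¹ ≠ 0 := by
    simp only [ne_eq, inv_eq_zero, Nat.cast_eq_zero]
    omega
  set t : ℝ := ((D:ℝ) * (1 - z^2)) / (2 * z^2) with ht
  rw [gaussianReal_of_var_ne_zero _ hv]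
  rw [show (gaussianPDF 0 (D:NNReal)⁻¹) = fun x =>
    ((gaussianPDFReal 0 (D:NNReal)⁻¹ x).toNNReal : ENNReal) from rfl]
  rw [integral_withDensity_eq_integral_smul
    ((measurable_gaussianPDFReal _ _).real_toNNReal)]
  have hco : ∀ x : ℝ, ((gaussianPDFReal 0 (D:NNReal)⁻¹ x).toNNReal : ℝ)
      = gaussianPDFReal 0 (D:NNReal)⁻¹ x :=
    fun x => Real.coe_toNNReal _ (gaussianPDFReal_nonneg _ _ _)
  simp_rw [NNReal.smul_def, smul_eq_mul, hco, gaussianPDFReal, sub_zero, mul_assoc,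
    ← Real.exp_add]
  rw [integral_const_mul]
  have hvv : NNReal.toReal ((D:NNReal))⁻¹ = (D:ℝ)⁻¹ := by
    rw [NNReal.coe_inv, NNReal.coe_natCast]
  set b : ℝ := (D:ℝ) / (2 * z^2) with hb
  have hexp : ∀ x : ℝ, -x ^ 2 / (2 * NNReal.toReal ((D:NNReal))⁻¹) + -t * x ^ 2
      = -b * x^2 := by
    intro x
    rw [hvv, ht, hb]
    field_simp
    ring
  simp_rw [hexp]
  rw [integral_gaussian b, hvv, ← Real.sqrt_inv, ← Real.sqrt_mul (by positivity)]
  rw [show (2 * (π * (D:ℝ)⁻¹))⁻¹ * (π / b) = z ^ 2 by rw [hb]; field_simp]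
  exact Real.sqrt_sq hz.le

/-- Small-ball lower bound for the isotropic Gaussian `N(0, Id_D/D)`: for `a ∈ (0,1)`
there is `D₀(a)` such that for all `D ≥ D₀` and `z ∈ (0, 1-a)`,
`-(1/D) log Π(‖θ‖₂ ≤ z) ≥ ½(z²/2 - log z - ½)`. -/
theorem stmt_1 (a : ℝ) (ha : a ∈ Set.Ioo (0 : ℝ) 1) :
    ∃ D0 : ℕ, ∀ D : ℕ, D0 ≤ D → ∀ z ∈ Set.Ioo (0 : ℝ) (1 - a),
      (1 / 2) * (z ^ 2 / 2 - Real.log z - 1 / 2) ≤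
        -(1 / (D : ℝ)) * Real.log
          (((Measure.pi fun _ : Fin D => gaussianReal 0 (D : NNReal)⁻¹)
            {θ | Real.sqrt (∑ i, θ i ^ 2) ≤ z}).toReal) := by
  refine ⟨1, fun D hD z hzmem => ?_⟩
  obtain ⟨hz, hz1a⟩ := hzmem
  have hz1 : z < 1 := lt_of_lt_of_le hz1a (by linarith [ha.1])
  have hD0 : (0:ℝ) < D := by exact_mod_cast hD
  have hv : ((D:NNReal))⁻¹ ≠ 0 := by
    simp only [ne_eq, inv_eq_zero, Nat.cast_eq_zero]; omega
  set mP : Measure (Fin D → ℝ) :=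
    Measure.pi fun _ : Fin D => gaussianReal 0 (D : NNReal)⁻¹ with hmP
  set S : Set (Fin D → ℝ) := {θ | Real.sqrt (∑ i, θ i ^ 2) ≤ z} with hS
  set t : ℝ := ((D:ℝ) * (1 - z^2)) / (2 * z^2) with ht
  have htpos : 0 < t := by
    apply div_pos (mul_pos hD0 (by nlinarith)) (by positivity)
  -- measurability of S
  have hmeas_sum : Measurable fun θ : Fin D → ℝ => ∑ i, θ i ^ 2 :=
    Finset.measurable_sum _ fun i _ => (measurable_pi_apply i).pow_const 2
  have hSm : MeasurableSet S :=
    measurableSet_le (Real.continuous_sqrt.measurable.comp hmeas_sum) measurable_const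
  -- On S, sum of squares ≤ z^2
  have hsum_le : ∀ θ ∈ S, ∑ i, θ i ^ 2 ≤ z ^ 2 := by
    intro θ hθ
    have h0 : 0 ≤ ∑ i, θ i ^ 2 := Finset.sum_nonneg fun i _ => sq_nonneg _
    have h1 : Real.sqrt (∑ i, θ i ^ 2) ≤ z := hθ
    nlinarith [Real.sq_sqrt h0, Real.sqrt_nonneg (∑ i, θ i ^ 2), h1, hz.le]
  -- positivity of mP S
  have hmPS_pos : 0 < mP S := by
    have hc : 0 < z / Real.sqrt D := by positivity
    set c := z / Real.sqrt D with hcdef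
    have hsub : (Set.pi Set.univ fun _ : Fin D => Set.Icc (-c) c) ⊆ S := by
      intro θ hθ
      simp only [Set.mem_pi, Set.mem_univ, forall_true_left] at hθ
      have hsum : ∑ i, θ i ^ 2 ≤ z ^ 2 := by
        calc ∑ i, θ i ^ 2 ≤ ∑ _i : Fin D, c ^ 2 := by
              apply Finset.sum_le_sum
              intro i _
              have := hθ i
              nlinarith [(hθ i).1, (hθ i).2]
          _ = D * c ^ 2 := by simp [Finset.sum_const, nsmul_eq_mul]
          _ = z ^ 2 := by
              rw [hcdef, div_pow, Real.sq_sqrt hD0.le]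
              field_simp
      show Real.sqrt (∑ i, θ i ^ 2) ≤ z
      rw [show z = Real.sqrt (z^2) from (Real.sqrt_sq hz.le).symm]
      exact Real.sqrt_le_sqrt hsum
    have hbox : 0 < mP (Set.pi Set.univ fun _ : Fin D => Set.Icc (-c) c) := by
      rw [hmP, Measure.pi_pi]
      simp only [pos_iff_ne_zero, Finset.prod_ne_zero_iff]
      intro i _ h0
      have := (gaussianReal_absolutelyContinuous' 0 hv) h0
      rw [Real.volume_Icc] at this
      simp only [ENNReal.ofReal_eq_zero] at this
      linarith
    exact lt_of_lt_of_le hbox (measure_mono hsub)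
  have hmPS_ne_top : mP S ≠ ⊤ := measure_ne_top _ _
  set P : ℝ := (mP S).toReal with hP
  have hP_pos : 0 < P := ENNReal.toReal_pos hmPS_pos.ne' hmPS_ne_top
  -- the Chernoff function
  set F : (Fin D → ℝ) → ℝ := fun θ => rexp (-t * ∑ i, θ i ^ 2) with hF
  have hFmeas : Measurable F := (hmeas_sum.const_mul (-t)).exp
  have hFle1 : ∀ θ, F θ ≤ 1 := by
    intro θ
    rw [hF]
    apply Real.exp_le_one_iff.mpr
    have h0 : 0 ≤ ∑ i, θ i ^ 2 := Finset.sum_nonneg fun i _ => sq_nonneg _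
    nlinarith
  have hFnonneg : ∀ θ, 0 ≤ F θ := fun θ => (Real.exp_pos _).le
  have hFint : Integrable F mP := by
    refine (integrable_const (1:ℝ)).mono' hFmeas.aestronglyMeasurable ?_
    filter_upwards with θ
    rw [Real.norm_eq_abs, abs_of_nonneg (hFnonneg θ)]
    exact hFle1 θ
  -- Markov step
  have hmarkov : rexp (-t * z ^ 2) * P ≤ ∫ θ, F θ ∂mP := by
    have h1 : ∫ θ in S, rexp (-t * z ^ 2) ∂mP ≤ ∫ θ in S, F θ ∂mP := by
      apply setIntegral_mono_on ((integrableOn_const_iff).mpr (Or.inr hmPS_ne_top.lt_top))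
        (hFint.integrableOn) hSm
      intro θ hθ
      apply Real.exp_le_exp.mpr
      have := hsum_le θ hθ
      nlinarith
    have h2 : ∫ θ in S, F θ ∂mP ≤ ∫ θ, F θ ∂mP :=
      setIntegral_le_integral hFint (ae_of_all _ hFnonneg)
    calc rexp (-t * z ^ 2) * P = ∫ θ in S, rexp (-t * z ^ 2) ∂mP := by
          rw [setIntegral_const, hP, smul_eq_mul, mul_comm, measureReal_def]
      _ ≤ _ := le_trans h1 h2
  -- product integral
  have hprod : ∫ θ, F θ ∂mP = z ^ D := by
    have heq : ∀ θ : Fin D → ℝ, F θ = ∏ i, rexp (-t * θ i ^ 2) := by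
      intro θ
      show rexp (-t * ∑ i, θ i ^ 2) = _
      rw [← Real.exp_sum, Finset.mul_sum]
    simp_rw [heq]
    rw [hmP]
    have h1d : (∫ θ : Fin D → ℝ, ∏ i : Fin D, rexp (-t * θ i ^ 2)
        ∂(Measure.pi fun _ : Fin D => gaussianReal 0 (D:NNReal)⁻¹))
        = (∫ x, rexp (-t * x ^ 2) ∂(gaussianReal 0 (D:NNReal)⁻¹)) ^ D := by
      letI : MeasureSpace ℝ := ⟨gaussianReal 0 (D:NNReal)⁻¹⟩
      haveI : SigmaFinite (volume : Measure ℝ) :=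
        (inferInstance : SigmaFinite (gaussianReal 0 (D:NNReal)⁻¹))
      have h2 := MeasureTheory.integral_fintype_prod_eq_pow (ι := Fin D) (μ := gaussianReal 0 (D:NNReal)⁻¹)
        (fun x : ℝ => rexp (-t * x ^ 2))
      simpa using h2
    rw [h1d, oneD_aux D hD z hz]
  -- conclude P ≤ exp(t z^2) * z^D
  have hP_le : P ≤ rexp (t * z ^ 2) * z ^ D := by
    rw [hprod] at hmarkov
    have he : rexp (-t * z ^ 2) = (rexp (t * z ^ 2))⁻¹ := by
      rw [← Real.exp_neg]; ring_nf
    rw [he] at hmarkov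
    have hepos : 0 < rexp (t * z ^ 2) := Real.exp_pos _
    calc P = rexp (t * z ^ 2) * ((rexp (t * z ^ 2))⁻¹ * P) := by field_simp
      _ ≤ rexp (t * z ^ 2) * z ^ D := by nlinarith
  -- take logs
  have hlog : Real.log P ≤ t * z ^ 2 + D * Real.log z := by
    calc Real.log P ≤ Real.log (rexp (t * z ^ 2) * z ^ D) := by
          apply Real.log_le_log hP_pos hP_le
      _ = t * z ^ 2 + D * Real.log z := by
          rw [Real.log_mul (Real.exp_pos _).ne' (by positivity), Real.log_exp,
            Real.log_pow]
  have htz : t * z ^ 2 = (D:ℝ) * (1 - z ^ 2) / 2 := by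
    rw [ht]; field_simp
  rw [htz] at hlog
  have hlogz : Real.log z ≤ (z ^ 2 - 1) / 2 := by
    nlinarith [Real.log_le_sub_one_of_pos hz]
  have key : (z ^ 2 - 1) / 2 - Real.log z ≤ -(1 / (D:ℝ)) * Real.log P := by
    have h3 : Real.log P / D ≤ (1 - z ^ 2) / 2 + Real.log z := by
      rw [div_le_iff₀ hD0]
      nlinarith [hlog]
    have h4 : -(1 / (D:ℝ)) * Real.log P = -(Real.log P / D) := by ring
    rw [h4]
    linarith
  have final : (1 / 2) * (z ^ 2 / 2 - Real.log z - 1 / 2)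
      ≤ (z ^ 2 - 1) / 2 - Real.log z := by nlinarith
  linarith [key]
end

section
/- In the setting where $Y_i = \varepsilon_i$ ($\varepsilon_i$ i.i.d. standard Gaussian, independent of i.i.d. $X_i$ with $\mathbb{E} g^2(X_1)=1$, $g$ bounded), let $\ell_N(\theta) = -\frac{w(\|\theta\|)}{2}\sum_{i=1}^N g^2(X_i) - \frac{1}{2}\sum_{i=1}^N \varepsilon_i^2 + \sqrt{w(\|\theta\|)}\sum_{i=1}^N \varepsilon_i g(X_i)$ with $w$ continuous, strictly increasing on $[r_0, L]$. Then there exists $C > 0$ such that for all $N \ge 1$, with probability at least $1 - C/N - C/(N w(r_0))$, for all $r_0 \le r < s \le L$ and all $\theta_r, \theta_s$ with $\|\theta_r\| = r$, $\|\theta_s\| = s$, one has $\ell_N(\theta_s) - \ell_N(\theta_r) \le -\frac{N}{4}(w(s) - w(r))$. -/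
open MeasureTheory ProbabilityTheory Real
open scoped NNReal ENNReal

lemma gauss_wd : gaussianReal 0 1 =
    volume.withDensity (fun x => ((Real.toNNReal (gaussianPDFReal 0 1 x) : ℝ≥0) : ℝ≥0∞)) := by
  rw [gaussianReal_of_var_ne_zero _ one_ne_zero]
  rfl

lemma gauss_integrable_aux : Integrable (fun x : ℝ => x ^ 2 * gaussianPDFReal 0 1 x) := by
  have h := integrable_rpow_mul_exp_neg_mul_sq (by norm_num : (0:ℝ) < 1/2)
    (by norm_num : (-1:ℝ) < 2)
  have h' : Integrable (fun x : ℝ => x ^ 2 * Real.exp (-(1/2) * x ^ 2)) := by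
    refine h.congr (Filter.Eventually.of_forall fun x => ?_)
    show x ^ (2:ℝ) * rexp (-(1/2) * x ^ 2) = x ^ 2 * rexp (-(1/2) * x ^ 2)
    rw [show ((2:ℝ)) = ((2:ℕ) : ℝ) by norm_num, Real.rpow_natCast]
  have h2 := h'.const_mul ((Real.sqrt (2 * π * ((1:ℝ≥0) : ℝ)))⁻¹)
  refine h2.congr (Filter.Eventually.of_forall fun x => ?_)
  simp only [gaussianPDFReal]
  push_cast
  ring_nf

lemma gauss_int2 : Integrable (fun x : ℝ => x ^ 2) (gaussianReal 0 1) := by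
  rw [gauss_wd, integrable_withDensity_iff]
  · refine gauss_integrable_aux.congr (Filter.Eventually.of_forall fun x => ?_)
    simp [ENNReal.coe_toReal, Real.coe_toNNReal _ (gaussianPDFReal_nonneg 0 1 x)]
  · exact (measurable_gaussianPDFReal 0 1).real_toNNReal.coe_nnreal_ennreal
  · exact Filter.Eventually.of_forall fun x => ENNReal.coe_lt_top

lemma gauss_int1 : Integrable (fun x : ℝ => x) (gaussianReal 0 1) := by
  have h : Integrable (fun x : ℝ => 1 + x ^ 2) (gaussianReal 0 1) :=
    (integrable_const 1).add gauss_int2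
  refine h.mono' measurable_id.aestronglyMeasurable ?_
  refine Filter.Eventually.of_forall fun x => ?_
  rw [Real.norm_eq_abs]
  nlinarith [sq_nonneg (|x| - 1), sq_abs x, abs_nonneg x]

lemma gauss_mean : ∫ x, x ∂(gaussianReal 0 1) = 0 := by
  rw [gauss_wd, integral_withDensity_eq_integral_smul
    (measurable_gaussianPDFReal 0 1).real_toNNReal]
  have heq : ∀ x : ℝ, (Real.toNNReal (gaussianPDFReal 0 1 x)) • x
      = gaussianPDFReal 0 1 x * x := by
    intro x
    simp [NNReal.smul_def, Real.coe_toNNReal _ (gaussianPDFReal_nonneg 0 1 x)]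
  have hodd : ∀ x : ℝ, gaussianPDFReal 0 1 (-x) * (-x) = -(gaussianPDFReal 0 1 x * x) := by
    intro x
    simp only [gaussianPDFReal]
    ring_nf
  have h0 : ∫ x : ℝ, gaussianPDFReal 0 1 x * x = 0 := by
    have h1 := MeasureTheory.integral_neg_eq_self (fun x : ℝ => gaussianPDFReal 0 1 x * x) volume
    simp only [hodd, integral_neg] at h1
    linarith
  simp only [heq, h0]

set_option maxHeartbeats 1000000 in
/-- With probability at least `1 - C/N - C/(N w(r₀))`, the log-likelihood
`ℓ_N(θ) = -½ ∑ᵢ (ε_i - √(w(‖θ‖)) g(X_i))²` is uniformly "monotone decreasing in `‖θ‖`":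
for all `r₀ ≤ ‖θ_r‖ < ‖θ_s‖ ≤ L`, `ℓ_N(θ_s) - ℓ_N(θ_r) ≤ -(N/4)(w(‖θ_s‖) - w(‖θ_r‖))`. -/
theorem stmt_10 {α : Type*} [MeasurableSpace α] (g : α → ℝ) (hgm : Measurable g)
    (gmin gmax : ℝ) (hgmin : 0 < gmin) (hgbd : ∀ x, g x ∈ Set.Icc gmin gmax)
    (w : ℝ → ℝ) (hwc : Continuous w) (hwnn : ∀ r, 0 ≤ w r)
    (r0 L : ℝ) (hr0 : 0 < r0) (hr0L : r0 < L) (hwr0 : 0 < w r0)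
    (hmono : StrictMonoOn w (Set.Icc r0 L)) (D : ℕ) :
    ∃ C : ℝ, 0 < C ∧ ∀ N : ℕ, 1 ≤ N →
      ∀ (Ω : Type) (_ : MeasurableSpace Ω) (P : Measure Ω), IsProbabilityMeasure P →
      ∀ (X : Fin N → Ω → α) (ε : Fin N → Ω → ℝ),
        (∀ i, Measurable (X i)) → (∀ i, Measurable (ε i)) →
        iIndepFun (fun i ω => (X i ω, ε i ω)) P →
        (∀ i j, IdentDistrib (X i) (X j) P P) →
        (∀ i, Measure.map (ε i) P = gaussianReal 0 1) →
        (∀ i, IndepFun (X i) (ε i) P) →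
        (∀ i, ∫ ω, g (X i ω) ^ 2 ∂P = 1) →
        ENNReal.ofReal (1 - C / N - C / (N * w r0)) ≤
          P {ω | ∀ θr θs : EuclideanSpace ℝ (Fin D),
            r0 ≤ ‖θr‖ → ‖θr‖ < ‖θs‖ → ‖θs‖ ≤ L →
            (-(1 / 2) * ∑ i, (ε i ω - Real.sqrt (w ‖θs‖) * g (X i ω)) ^ 2) -
              (-(1 / 2) * ∑ i, (ε i ω - Real.sqrt (w ‖θr‖) * g (X i ω)) ^ 2) ≤
              -((N : ℝ) / 4) * (w ‖θs‖ - w ‖θr‖)} := by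
  classical
  have hm2nn : (0:ℝ) ≤ ∫ x, x ^ 2 ∂(gaussianReal 0 1) := integral_nonneg fun x => sq_nonneg x
  set m2 : ℝ := ∫ x, x ^ 2 ∂(gaussianReal 0 1) with hm2def
  set C : ℝ := 16 * gmax ^ 4 + 64 * m2 + 1 with hCdef
  have hCpos : 0 < C := by nlinarith [sq_nonneg (gmax ^ 2), hm2nn]
  refine ⟨C, hCpos, ?_⟩
  intro N hN Ω mΩ P hP X ε hXm hεm hindep hident hεmap hXε hg2
  have hN1 : (1:ℝ) ≤ (N:ℝ) := by exact_mod_cast hN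
  have hNpos : (0:ℝ) < (N:ℝ) := by linarith
  -- nonemptiness, to get gmax > 0
  have hΩne : Nonempty Ω := by
    rcases isEmpty_or_nonempty Ω with h | h
    · exfalso
      have h1 := hP.measure_univ
      rw [Set.univ_eq_empty_iff.mpr h, measure_empty] at h1
      exact zero_ne_one h1
    · exact h
  obtain ⟨ω0⟩ := hΩne
  have hgmax : 0 < gmax :=
    lt_of_lt_of_le hgmin ((hgbd (X ⟨0, hN⟩ ω0)).1.trans (hgbd (X ⟨0, hN⟩ ω0)).2)
  -- basic bounds on g
  have hgpos : ∀ x, 0 < g x := fun x => lt_of_lt_of_le hgmin (hgbd x).1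
  have hgsq : ∀ x, g x ^ 2 ≤ gmax ^ 2 := fun x =>
    pow_le_pow_left₀ (hgpos x).le (hgbd x).2 2
  -- the summand functions
  set f : Fin N → Ω → ℝ := fun i ω => g (X i ω) ^ 2 with hfdef
  set h : Fin N → Ω → ℝ := fun i ω => ε i ω * g (X i ω) with hhdef
  have hfm : ∀ i, Measurable (f i) := fun i => (hgm.comp (hXm i)).pow_const 2
  have hhm : ∀ i, Measurable (h i) := fun i => (hεm i).mul (hgm.comp (hXm i))
  have hfL : ∀ i, MemLp (f i) 2 P := by
    intro i
    refine MemLp.of_bound (hfm i).aestronglyMeasurable (gmax ^ 2)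
      (Filter.Eventually.of_forall fun ω => ?_)
    rw [Real.norm_eq_abs, abs_of_nonneg (sq_nonneg _)]
    exact hgsq _
  -- integrability facts coming from the gaussian law
  have hε2int : ∀ i, Integrable (fun ω => ε i ω ^ 2) P := by
    intro i
    have h1 : Integrable (fun x : ℝ => x ^ 2) (Measure.map (ε i) P) := by
      rw [hεmap i]; exact gauss_int2
    exact (integrable_map_measure (measurable_id.pow_const 2).aestronglyMeasurable
      (hεm i).aemeasurable).mp h1
  have hεint : ∀ i, Integrable (ε i) P := by
    intro i
    have h1 : Integrable (fun x : ℝ => x) (Measure.map (ε i) P) := by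
      rw [hεmap i]; exact gauss_int1
    exact (integrable_map_measure measurable_id.aestronglyMeasurable
      (hεm i).aemeasurable).mp h1
  have hεmean : ∀ i, ∫ ω, ε i ω ∂P = 0 := by
    intro i
    have h1 : ∫ ω, ε i ω ∂P = ∫ x, x ∂(Measure.map (ε i) P) :=
      (integral_map (hεm i).aemeasurable measurable_id.aestronglyMeasurable).symm
    rw [h1, hεmap i, gauss_mean]
  have hε2mean : ∀ i, ∫ ω, ε i ω ^ 2 ∂P = m2 := by
    intro i
    have h1 : ∫ ω, ε i ω ^ 2 ∂P = ∫ x, x ^ 2 ∂(Measure.map (ε i) P) :=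
      (integral_map (hεm i).aemeasurable
        (measurable_id.pow_const 2).aestronglyMeasurable).symm
    rw [h1, hεmap i]
  have hhL : ∀ i, MemLp (h i) 2 P := by
    intro i
    rw [memLp_two_iff_integrable_sq (hhm i).aestronglyMeasurable]
    refine ((hε2int i).const_mul (gmax ^ 2)).mono' ?_
      (Filter.Eventually.of_forall fun ω => ?_)
    · exact ((hhm i).pow_const 2).aestronglyMeasurable
    · rw [Real.norm_eq_abs, abs_of_nonneg (sq_nonneg _)]
      have := hgsq (X i ω)
      have h2 := sq_nonneg (ε i ω)
      calc h i ω ^ 2 = ε i ω ^ 2 * g (X i ω) ^ 2 := by simp [hhdef]; ring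
        _ ≤ ε i ω ^ 2 * gmax ^ 2 := by nlinarith
        _ = gmax ^ 2 * ε i ω ^ 2 := by ring
  -- independence of ε i and g(X i)
  have hind1 : ∀ i, IndepFun (ε i) (fun ω => g (X i ω)) P := fun i =>
    (hXε i).symm.comp measurable_id hgm
  have hEh : ∀ i, ∫ ω, h i ω ∂P = 0 := by
    intro i
    have h1 := (hind1 i).integral_mul_eq_mul_integral (hεm i).aestronglyMeasurable
      (hgm.comp (hXm i)).aestronglyMeasurable
    have h2 : ∫ ω, h i ω ∂P = (∫ ω, ε i ω ∂P) * ∫ ω, g (X i ω) ∂P := h1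
    rw [h2, hεmean i, zero_mul]
  -- variance bounds
  have hVarf : ∀ i, variance (f i) P ≤ gmax ^ 4 := by
    intro i
    refine (variance_le_expectation_sq (hfm i).aestronglyMeasurable).trans ?_
    have h1 : ∫ ω, (f i ^ 2) ω ∂P ≤ ∫ _ω, gmax ^ 4 ∂P := by
      refine integral_mono (hfL i).integrable_sq (integrable_const _) fun ω => ?_
      have := hgsq (X i ω)
      have h2 := sq_nonneg (g (X i ω))
      simp only [Pi.pow_apply, hfdef]
      nlinarith
    refine h1.trans ?_
    rw [integral_const]
    simp
  have hVarh : ∀ i, variance (h i) P ≤ m2 := by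
    intro i
    refine (variance_le_expectation_sq (hhm i).aestronglyMeasurable).trans ?_
    have hind2 : IndepFun (fun ω => ε i ω ^ 2) (fun ω => g (X i ω) ^ 2) P :=
      (hXε i).symm.comp (measurable_id.pow_const 2) (hgm.pow_const 2)
    have h1 := hind2.integral_mul_eq_mul_integral ((hεm i).pow_const 2).aestronglyMeasurable
      ((hgm.comp (hXm i)).pow_const 2).aestronglyMeasurable
    have h2 : ∫ ω, (h i ^ 2) ω ∂P
        = (∫ ω, ε i ω ^ 2 ∂P) * ∫ ω, g (X i ω) ^ 2 ∂P := by
      rw [← h1]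
      refine integral_congr_ae (Filter.Eventually.of_forall fun ω => ?_)
      simp only [Pi.pow_apply, Pi.mul_apply, hhdef]
      ring
    rw [h2, hε2mean i, hg2 i, mul_one]
  -- pairwise independence
  have hpairf : ∀ i j, i ≠ j → IndepFun (f i) (f j) P := by
    intro i j hij
    have h1 := hindep.comp (fun _ => fun p : α × ℝ => g p.1 ^ 2)
      (fun _ => (hgm.comp measurable_fst).pow_const 2)
    exact h1.indepFun hij
  have hpairh : ∀ i j, i ≠ j → IndepFun (h i) (h j) P := by
    intro i j hij
    have h1 := hindep.comp (fun _ => fun p : α × ℝ => p.2 * g p.1)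
      (fun _ => measurable_snd.mul (hgm.comp measurable_fst))
    exact h1.indepFun hij
  -- the sums
  set A : Ω → ℝ := ∑ i, f i with hAdef
  set B : Ω → ℝ := ∑ i, h i with hBdef
  have hAapp : ∀ ω, A ω = ∑ i, g (X i ω) ^ 2 := fun ω => by
    simp [hAdef, Finset.sum_apply, hfdef]
  have hBapp : ∀ ω, B ω = ∑ i, ε i ω * g (X i ω) := fun ω => by
    simp [hBdef, Finset.sum_apply, hhdef]
  have hAm : Measurable A := by
    have h1 : Measurable (fun ω => ∑ i, f i ω) := Finset.measurable_sum _ fun i _ => hfm i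
    have h2 : A = fun ω => ∑ i, f i ω := funext fun ω => Finset.sum_apply ω Finset.univ f
    rw [h2]; exact h1
  have hBm : Measurable B := by
    have h1 : Measurable (fun ω => ∑ i, h i ω) := Finset.measurable_sum _ fun i _ => hhm i
    have h2 : B = fun ω => ∑ i, h i ω := funext fun ω => Finset.sum_apply ω Finset.univ h
    rw [h2]; exact h1
  have hAL : MemLp A 2 P := memLp_finset_sum' _ fun i _ => hfL i
  have hBL : MemLp B 2 P := memLp_finset_sum' _ fun i _ => hhL i
  have hEA : ∫ ω, A ω ∂P = (N : ℝ) := by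
    have h1 : ∫ ω, A ω ∂P = ∑ i, ∫ ω, f i ω ∂P := by
      simp only [hAdef, Finset.sum_apply]
      exact integral_finset_sum _ fun i _ => (hfL i).integrable one_le_two
    rw [h1]
    simp only [hfdef]
    rw [Finset.sum_congr rfl fun i _ => hg2 i]
    simp
  have hEB : ∫ ω, B ω ∂P = 0 := by
    have h1 : ∫ ω, B ω ∂P = ∑ i, ∫ ω, h i ω ∂P := by
      simp only [hBdef, Finset.sum_apply]
      exact integral_finset_sum _ fun i _ => (hhL i).integrable one_le_two
    rw [h1, Finset.sum_congr rfl fun i _ => hEh i]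
    simp
  have hVarA : variance A P ≤ (N : ℝ) * gmax ^ 4 := by
    rw [hAdef, IndepFun.variance_sum (fun i _ => hfL i)
      (fun i _ j _ hij => hpairf i j hij)]
    calc ∑ i, variance (f i) P ≤ ∑ _i : Fin N, gmax ^ 4 :=
          Finset.sum_le_sum fun i _ => hVarf i
      _ = (N : ℝ) * gmax ^ 4 := by simp [Finset.sum_const, nsmul_eq_mul]
  have hVarB : variance B P ≤ (N : ℝ) * m2 := by
    rw [hBdef, IndepFun.variance_sum (fun i _ => hhL i)
      (fun i _ j _ hij => hpairh i j hij)]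
    calc ∑ i, variance (h i) P ≤ ∑ _i : Fin N, m2 :=
          Finset.sum_le_sum fun i _ => hVarh i
      _ = (N : ℝ) * m2 := by simp [Finset.sum_const, nsmul_eq_mul]
  -- Chebyshev
  set c0 : ℝ := Real.sqrt (w r0) with hc0def
  have hc0 : 0 < c0 := Real.sqrt_pos.mpr hwr0
  have hc02 : c0 ^ 2 = w r0 := Real.sq_sqrt (hwnn r0)
  have hchebA : P {ω | (N:ℝ)/4 ≤ |A ω - (N:ℝ)|}
      ≤ ENNReal.ofReal (variance A P / ((N:ℝ)/4) ^ 2) := by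
    have h1 := meas_ge_le_variance_div_sq (X := A) hAL
      (show (0:ℝ) < (N:ℝ)/4 by positivity)
    rw [hEA] at h1
    exact h1
  have hchebB : P {ω | c0 * N / 8 ≤ |B ω - 0|}
      ≤ ENNReal.ofReal (variance B P / (c0 * N / 8) ^ 2) := by
    have h1 := meas_ge_le_variance_div_sq (X := B) hBL
      (show (0:ℝ) < c0 * N / 8 by positivity)
    rw [hEB] at h1
    exact h1
  have hvAnn : 0 ≤ variance A P := variance_nonneg _ _
  have hvBnn : 0 ≤ variance B P := variance_nonneg _ _
  have hboundA : variance A P / ((N:ℝ)/4) ^ 2 ≤ C / N := by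
    rw [div_le_div_iff₀ (by positivity) hNpos]
    nlinarith [mul_le_mul_of_nonneg_right hVarA hNpos.le, hm2nn, sq_nonneg (N:ℝ),
      sq_nonneg ((N:ℝ) * gmax ^ 2)]
  have hboundB : variance B P / (c0 * N / 8) ^ 2 ≤ C / (N * w r0) := by
    rw [div_le_div_iff₀ (by positivity) (by positivity)]
    have hexp : (c0 * N / 8) ^ 2 = w r0 * N ^ 2 / 64 := by
      rw [div_pow, mul_pow, hc02]
      norm_num
    rw [hexp]
    nlinarith [mul_le_mul_of_nonneg_right hVarB (by positivity : (0:ℝ) ≤ (N:ℝ) * w r0),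
      hm2nn, sq_nonneg (N:ℝ), sq_nonneg (gmax ^ 2), mul_pos hNpos hwr0,
      mul_nonneg (mul_nonneg hNpos.le hNpos.le) (hwnn r0)]
  -- the good event
  set badA : Set Ω := {ω | (N:ℝ)/4 ≤ |A ω - (N:ℝ)|} with hbadAdef
  set badB : Set Ω := {ω | c0 * N / 8 ≤ |B ω - 0|} with hbadBdef
  set T : Set Ω := (badA ∪ badB)ᶜ with hTdef
  have hbadAm : MeasurableSet badA :=
    measurableSet_le measurable_const (hAm.sub measurable_const).abs
  have hbadBm : MeasurableSet badB :=
    measurableSet_le measurable_const (hBm.sub measurable_const).abs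
  have hTm : MeasurableSet T := (hbadAm.union hbadBm).compl
  -- deterministic inclusion
  have hsub : T ⊆ {ω | ∀ θr θs : EuclideanSpace ℝ (Fin D),
      r0 ≤ ‖θr‖ → ‖θr‖ < ‖θs‖ → ‖θs‖ ≤ L →
      (-(1 / 2) * ∑ i, (ε i ω - Real.sqrt (w ‖θs‖) * g (X i ω)) ^ 2) -
        (-(1 / 2) * ∑ i, (ε i ω - Real.sqrt (w ‖θr‖) * g (X i ω)) ^ 2) ≤
        -((N : ℝ) / 4) * (w ‖θs‖ - w ‖θr‖)} := by
    intro ω hω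
    simp only [hTdef, Set.mem_compl_iff, Set.mem_union, hbadAdef, hbadBdef,
      Set.mem_setOf_eq, not_or, not_le] at hω
    obtain ⟨hωA, hωB⟩ := hω
    have hA3 : 3 * (N:ℝ) / 4 < A ω := by
      have := abs_lt.mp hωA
      linarith [this.1]
    have hBub : B ω ≤ c0 * N / 8 := by
      have := abs_lt.mp hωB
      linarith [this.2]
    intro θr θs hr hrs hsL
    set r : ℝ := ‖θr‖
    set s : ℝ := ‖θs‖
    have hrIcc : r ∈ Set.Icc r0 L := ⟨hr, (hrs.trans_le hsL).le⟩
    have hsIcc : s ∈ Set.Icc r0 L := ⟨hr.trans hrs.le, hsL⟩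
    have hwrs : w r < w s := hmono hrIcc hsIcc hrs
    have hwr0r : w r0 ≤ w r :=
      hmono.monotoneOn ⟨le_refl r0, hr0L.le⟩ hrIcc hr
    set a : ℝ := Real.sqrt (w r) with hadef
    set b : ℝ := Real.sqrt (w s) with hbdef
    have ha2 : a ^ 2 = w r := Real.sq_sqrt (hwnn r)
    have hb2 : b ^ 2 = w s := Real.sq_sqrt (hwnn s)
    have ha0 : 0 ≤ a := Real.sqrt_nonneg _
    have hab : a < b := Real.sqrt_lt_sqrt (hwnn r) hwrs
    have hc0a : c0 ≤ a := Real.sqrt_le_sqrt hwr0r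
    -- expansion of the sums
    have expand : ∀ t : ℝ, ∑ i, (ε i ω - t * g (X i ω)) ^ 2
        = (∑ i, ε i ω ^ 2) - 2 * t * B ω + t ^ 2 * A ω := by
      intro t
      rw [hBapp ω, hAapp ω, Finset.mul_sum, Finset.mul_sum,
        ← Finset.sum_sub_distrib, ← Finset.sum_add_distrib]
      exact Finset.sum_congr rfl fun i _ => by ring
    rw [expand, expand]
    have hkey : (-(1 / 2) * ((∑ i, ε i ω ^ 2) - 2 * b * B ω + b ^ 2 * A ω)) -
        (-(1 / 2) * ((∑ i, ε i ω ^ 2) - 2 * a * B ω + a ^ 2 * A ω))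
        = -((b ^ 2 - a ^ 2) / 2) * A ω + (b - a) * B ω := by ring
    rw [hkey, ← ha2, ← hb2]
    -- the final inequality
    have hba : (0:ℝ) < b - a := sub_pos.mpr hab
    have hΔ : (0:ℝ) < b ^ 2 - a ^ 2 := by
      nlinarith [mul_pos hba (show (0:ℝ) < a + b by linarith)]
    have step1 : (b - a) * B ω ≤ (b - a) * (c0 * N / 8) :=
      mul_le_mul_of_nonneg_left hBub hba.le
    have step2 : c0 ≤ (a + b) / 2 := by linarith
    have step3 : (b - a) * (c0 * N / 8) ≤ (b - a) * ((a + b) / 2 * N / 8) := by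
      refine mul_le_mul_of_nonneg_left ?_ hba.le
      have := mul_le_mul_of_nonneg_right step2 (by positivity : (0:ℝ) ≤ N / 8)
      calc c0 * N / 8 = c0 * (N / 8) := by ring
        _ ≤ (a + b) / 2 * (N / 8) := this
        _ = (a + b) / 2 * N / 8 := by ring
    have step4 : (b - a) * ((a + b) / 2 * N / 8) = (b ^ 2 - a ^ 2) * N / 16 := by ring
    have step5 : -((b ^ 2 - a ^ 2) / 2) * A ω ≤ -((b ^ 2 - a ^ 2) / 2) * (3 * N / 4) := by
      have h1 := mul_le_mul_of_nonneg_left hA3.le (by positivity : (0:ℝ) ≤ (b ^ 2 - a ^ 2) / 2)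
      linarith
    linarith [step1, step3, step4, step5, mul_nonneg hΔ.le hNpos.le]
  -- probability assembly
  by_cases hcase : 1 - C / N - C / (N * w r0) ≤ 0
  · rw [ENNReal.ofReal_eq_zero.mpr hcase]
    exact bot_le
  · push_neg at hcase
    have hq1 : (0:ℝ) ≤ C / N := by positivity
    have hq2 : (0:ℝ) ≤ C / (N * w r0) := by positivity
    have hPTc : P Tᶜ ≤ ENNReal.ofReal (C / N + C / (N * w r0)) := by
      have h1 : P Tᶜ ≤ P badA + P badB := by
        rw [hTdef, compl_compl]
        exact measure_union_le _ _
      refine h1.trans ?_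
      rw [ENNReal.ofReal_add hq1 hq2]
      exact add_le_add (hchebA.trans (ENNReal.ofReal_le_ofReal hboundA))
        (hchebB.trans (ENNReal.ofReal_le_ofReal hboundB))
    have hone : P T + P Tᶜ = 1 := by
      rw [measure_add_measure_compl hTm, measure_univ]
    calc ENNReal.ofReal (1 - C / N - C / (N * w r0))
        = ENNReal.ofReal (1 - (C / N + C / (N * w r0))) := by ring_nf
      _ = 1 - ENNReal.ofReal (C / N + C / (N * w r0)) := by
          rw [ENNReal.ofReal_sub _ (by positivity), ENNReal.ofReal_one]
      _ ≤ 1 - P Tᶜ := tsub_le_tsub_left hPTc 1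
      _ ≤ P T := by
          rw [tsub_le_iff_right, ← hone]
      _ ≤ P _ := measure_mono hsub
end

section
/- Let $\mu$ be a probability measure on $\mathbb{R}^D$, and suppose disjoint measurable sets $S$ (start), $W$ (well), $T$ (target), and the escape set $B_L^c$ satisfy $\mu(W)/\mu(S) \le e^{-\nu N}$ and $\mu(B_L^c)/\mu(S) \le e^{-\nu N}$ for some $\nu \ge 1$, $N \ge 1$. Let $(\vartheta_k)$ be a Markov chain with invariant measure $\mu$, started from $\mu(\cdot \mid S)$, whose one-step displacement exceeds $\eta/2$ from any state in $B_L$ with probability at most $e^{-c_0 N}$, and suppose that, whenever all steps up to time $k$ have size $< \eta/2$ and the chain remains in $B_L$, any path from $S$ to $T$ must pass through $W$. Then $\Pr(\tau_T \le e^{(1 \wedge c_0) N/2}) \le 3 e^{-(1 \wedge c_0) N / 2}$. -/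
open MeasureTheory ProbabilityTheory

/-- Exponential hitting-time lower bound for the target region: under the bottleneck
bounds `μ(W)/μ(S) ≤ e^{-νN}`, `μ(B_L^c)/μ(S) ≤ e^{-νN}` (`ν ≥ 1`), the small-step bound
on `B_L`, initialisation from `μ(·|S)`, and the geometric condition that small-step paths
from `S` to `T` staying in `B_L` must pass through `W`, one has
`Pr(τ_T ≤ e^{(1∧c₀)N/2}) ≤ 3 e^{-(1∧c₀)N/2}`. -/
theorem stmt_17 (D : ℕ) (μ : Measure (EuclideanSpace ℝ (Fin D))) [IsProbabilityMeasure μ]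
    (S W T : Set (EuclideanSpace ℝ (Fin D)))
    (hSm : MeasurableSet S) (hWm : MeasurableSet W) (hTm : MeasurableSet T)
    (hSW : Disjoint S W) (hST : Disjoint S T) (hWT : Disjoint W T)
    (L η ν c0 : ℝ) (hL : 0 < L) (hη : 0 < η) (hν : 1 ≤ ν) (hc0 : 0 < c0)
    (N : ℕ) (hN : 1 ≤ N)
    (hμS : 0 < μ S) (hSL : S ⊆ {θ | ‖θ‖ ≤ L})
    (hW : μ W / μ S ≤ ENNReal.ofReal (Real.exp (-ν * N)))
    (hBL : μ {θ | L < ‖θ‖} / μ S ≤ ENNReal.ofReal (Real.exp (-ν * N)))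
    {Ω : Type*} [MeasurableSpace Ω] (P : Measure Ω) [IsProbabilityMeasure P]
    (ϑ : ℕ → Ω → EuclideanSpace ℝ (Fin D)) (hϑ : ∀ k, Measurable (ϑ k))
    (κ : Kernel (EuclideanSpace ℝ (Fin D)) (EuclideanSpace ℝ (Fin D))) [IsMarkovKernel κ]
    (hinv : μ.bind (fun x => κ x) = μ)
    (hinit : Measure.map (ϑ 0) P = ProbabilityTheory.cond μ S)
    (hjoint : ∀ k, Measure.map (fun ω => (ϑ k ω, ϑ (k + 1) ω)) P =
      (Measure.map (ϑ k) P).compProd κ)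
    (hstep : ∀ θ : EuclideanSpace ℝ (Fin D), ‖θ‖ ≤ L →
      κ θ {v | η / 2 ≤ ‖θ - v‖} ≤ ENNReal.ofReal (Real.exp (-c0 * N)))
    (hpath : ∀ ω, ∀ k : ℕ, ϑ 0 ω ∈ S →
      (∀ j < k, ‖ϑ (j + 1) ω - ϑ j ω‖ < η / 2) →
      (∀ j ≤ k, ‖ϑ j ω‖ ≤ L) →
      ϑ k ω ∈ T → ∃ j ≤ k, ϑ j ω ∈ W) :
    P {ω | ∃ k : ℕ, (k : ℝ) ≤ Real.exp (min 1 c0 * N / 2) ∧ ϑ k ω ∈ T} ≤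
      ENNReal.ofReal (3 * Real.exp (-(min 1 c0) * N / 2)) := by
  classical
  set m : ℝ := min 1 c0 with hm
  have hm0 : 0 < m := lt_min one_pos hc0
  have hm1 : m ≤ 1 := min_le_left _ _
  have hmc0 : m ≤ c0 := min_le_right _ _
  set K : ℝ := Real.exp (m * N / 2) with hK
  have hK1 : 1 ≤ K := Real.one_le_exp (by positivity)
  set n : ℕ := ⌊K⌋₊ with hn
  have hnK : (n : ℝ) ≤ K := Nat.floor_le (by linarith)
  -- probability measures for marginals
  have hprob : ∀ k, IsProbabilityMeasure (Measure.map (ϑ k) P) :=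
    fun k => Measure.isProbabilityMeasure_map (hϑ k).aemeasurable
  -- marginal domination
  have hmarg : ∀ k, Measure.map (ϑ k) P ≤ (μ S)⁻¹ • μ := by
    intro k
    induction k with
    | zero =>
      rw [hinit, ProbabilityTheory.cond]
      intro s
      simp only [Measure.smul_apply, smul_eq_mul]
      exact mul_le_mul_right (Measure.restrict_le_self s) _
    | succ k ih =>
      have := hprob k
      rw [Measure.le_iff]
      intro s hs
      have hmap : Measure.map (ϑ (k + 1)) P s
          = ∫⁻ a, κ a s ∂(Measure.map (ϑ k) P) := by
        rw [Measure.map_apply (hϑ (k + 1)) hs]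
        have hpre : ϑ (k + 1) ⁻¹' s
            = (fun ω => (ϑ k ω, ϑ (k + 1) ω)) ⁻¹' (Set.univ ×ˢ s) := by
          ext ω; simp
        rw [hpre, ← Measure.map_apply ((hϑ k).prodMk (hϑ (k + 1)))
          (MeasurableSet.univ.prod hs), hjoint k,
          Measure.compProd_apply_prod MeasurableSet.univ hs,
          setLIntegral_univ]
      rw [hmap]
      calc ∫⁻ a, κ a s ∂(Measure.map (ϑ k) P)
          ≤ ∫⁻ a, κ a s ∂((μ S)⁻¹ • μ) := lintegral_mono' ih le_rfl
        _ = (μ S)⁻¹ * ∫⁻ a, κ a s ∂μ := by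
            rw [lintegral_smul_measure, smul_eq_mul]
        _ = (μ S)⁻¹ * (μ.bind (fun x => κ x)) s := by
            rw [Measure.bind_apply hs (Kernel.measurable κ).aemeasurable]
        _ = ((μ S)⁻¹ • μ) s := by rw [hinv]; rfl
  -- measurability of the exit set
  have hBLm : MeasurableSet {θ : EuclideanSpace ℝ (Fin D) | L < ‖θ‖} :=
    measurableSet_lt measurable_const measurable_norm
  -- single-index bounds
  have hWb : ∀ k : ℕ, P {ω | ϑ k ω ∈ W} ≤ ENNReal.ofReal (Real.exp (-ν * N)) := by
    intro k
    have : P {ω | ϑ k ω ∈ W} = Measure.map (ϑ k) P W := by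
      rw [Measure.map_apply (hϑ k) hWm]; rfl
    rw [this]
    calc Measure.map (ϑ k) P W ≤ ((μ S)⁻¹ • μ) W := hmarg k W
      _ = μ W / μ S := by
          rw [Measure.smul_apply, smul_eq_mul, mul_comm, ENNReal.div_eq_inv_mul, mul_comm]
      _ ≤ _ := hW
  have hEb : ∀ k : ℕ, P {ω | L < ‖ϑ k ω‖} ≤ ENNReal.ofReal (Real.exp (-ν * N)) := by
    intro k
    have : P {ω | L < ‖ϑ k ω‖} = Measure.map (ϑ k) P {θ | L < ‖θ‖} := by
      rw [Measure.map_apply (hϑ k) hBLm]; rfl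
    rw [this]
    calc Measure.map (ϑ k) P {θ | L < ‖θ‖} ≤ ((μ S)⁻¹ • μ) {θ | L < ‖θ‖} :=
          hmarg k _
      _ = μ {θ | L < ‖θ‖} / μ S := by
          rw [Measure.smul_apply, smul_eq_mul, mul_comm, ENNReal.div_eq_inv_mul, mul_comm]
      _ ≤ _ := hBL
  -- big-step bound
  have hBb : ∀ k : ℕ, P {ω | ‖ϑ k ω‖ ≤ L ∧ η / 2 ≤ ‖ϑ (k + 1) ω - ϑ k ω‖}
      ≤ ENNReal.ofReal (Real.exp (-c0 * N)) := by
    intro k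
    have := hprob k
    set s : Set (EuclideanSpace ℝ (Fin D) × EuclideanSpace ℝ (Fin D)) :=
      {p | ‖p.1‖ ≤ L ∧ η / 2 ≤ ‖p.1 - p.2‖} with hsdef
    have hsm : MeasurableSet s :=
      (measurableSet_le measurable_fst.norm measurable_const).inter
        (measurableSet_le measurable_const (measurable_fst.sub measurable_snd).norm)
    have hev : {ω | ‖ϑ k ω‖ ≤ L ∧ η / 2 ≤ ‖ϑ (k + 1) ω - ϑ k ω‖}
        = (fun ω => (ϑ k ω, ϑ (k + 1) ω)) ⁻¹' s := by
      ext ω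
      simp only [Set.mem_setOf_eq, Set.mem_preimage, hsdef, norm_sub_rev (ϑ k ω)]
    rw [hev, ← Measure.map_apply ((hϑ k).prodMk (hϑ (k + 1))) hsm, hjoint k,
      Measure.compProd_apply hsm]
    calc ∫⁻ a, κ a (Prod.mk a ⁻¹' s) ∂(Measure.map (ϑ k) P)
        ≤ ∫⁻ _, ENNReal.ofReal (Real.exp (-c0 * N)) ∂(Measure.map (ϑ k) P) := by
          apply lintegral_mono
          intro a
          by_cases ha : ‖a‖ ≤ L
          · refine le_trans (measure_mono ?_) (hstep a ha)
            intro v hv; exact hv.2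
          · have : Prod.mk a ⁻¹' s = ∅ := by
              ext v; simp only [Set.mem_preimage, hsdef, Set.mem_setOf_eq,
                Set.mem_empty_iff_false, iff_false]
              exact fun h => ha h.1
            simp [this]
      _ = ENNReal.ofReal (Real.exp (-c0 * N)) := by
          rw [lintegral_const, measure_univ, mul_one]
  -- initial state in S almost surely
  have hS0 : P {ω | ϑ 0 ω ∉ S} = 0 := by
    have : P {ω | ϑ 0 ω ∉ S} = Measure.map (ϑ 0) P Sᶜ := by
      rw [Measure.map_apply (hϑ 0) hSm.compl]; rfl
    rw [this, hinit, ProbabilityTheory.cond_apply hSm]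
    simp
  -- the decomposition
  have hsub : {ω | ∃ k : ℕ, (k : ℝ) ≤ K ∧ ϑ k ω ∈ T}
      ⊆ {ω | ϑ 0 ω ∉ S}
        ∪ ((⋃ j ∈ Finset.Icc 1 n, ({ω | ϑ j ω ∈ W} ∪ {ω | L < ‖ϑ j ω‖}))
        ∪ (⋃ j ∈ Finset.range n, {ω | ‖ϑ j ω‖ ≤ L ∧ η / 2 ≤ ‖ϑ (j + 1) ω - ϑ j ω‖})) := by
    rintro ω ⟨k, hkK, hkT⟩
    by_cases h0 : ϑ 0 ω ∈ S
    · right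
      have hkn : k ≤ n := Nat.le_floor hkK
      by_cases hWhit : ∃ j ≤ k, ϑ j ω ∈ W
      · obtain ⟨j, hjk, hjW⟩ := hWhit
        left
        have hj1 : 1 ≤ j := by
          rcases Nat.eq_zero_or_pos j with rfl | h
          · exact absurd hjW (fun h => hSW.ne_of_mem h0 h rfl)
          · exact h
        exact Set.mem_biUnion (Finset.mem_Icc.mpr ⟨hj1, hjk.trans hkn⟩) (Or.inl hjW)
      · by_cases hExit : ∃ j ≤ k, L < ‖ϑ j ω‖
        · obtain ⟨j, hjk, hjE⟩ := hExit
          left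
          have hj1 : 1 ≤ j := by
            rcases Nat.eq_zero_or_pos j with rfl | h
            · exact absurd hjE (not_lt.mpr (hSL h0))
            · exact h
          exact Set.mem_biUnion (Finset.mem_Icc.mpr ⟨hj1, hjk.trans hkn⟩) (Or.inr hjE)
        · right
          push_neg at hExit
          by_contra hBig
          simp only [Set.mem_iUnion, Finset.mem_range, not_exists, Set.mem_setOf_eq,
            not_and, not_le, exists_prop] at hBig
          refine hWhit (hpath ω k h0 ?_ hExit hkT)
          intro j hjk
          exact hBig j (lt_of_lt_of_le hjk hkn) (hExit j (le_of_lt hjk))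
    · left; exact h0
  -- union bound
  calc P {ω | ∃ k : ℕ, (k : ℝ) ≤ Real.exp (m * N / 2) ∧ ϑ k ω ∈ T}
      ≤ P ({ω | ϑ 0 ω ∉ S}
        ∪ ((⋃ j ∈ Finset.Icc 1 n, ({ω | ϑ j ω ∈ W} ∪ {ω | L < ‖ϑ j ω‖}))
        ∪ (⋃ j ∈ Finset.range n, {ω | ‖ϑ j ω‖ ≤ L ∧ η / 2 ≤ ‖ϑ (j + 1) ω - ϑ j ω‖}))) :=
        measure_mono hsub
    _ ≤ P {ω | ϑ 0 ω ∉ S}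
        + (P (⋃ j ∈ Finset.Icc 1 n, ({ω | ϑ j ω ∈ W} ∪ {ω | L < ‖ϑ j ω‖}))
        + P (⋃ j ∈ Finset.range n, {ω | ‖ϑ j ω‖ ≤ L ∧ η / 2 ≤ ‖ϑ (j + 1) ω - ϑ j ω‖})) := by
        refine le_trans (measure_union_le _ _) ?_
        gcongr
        exact measure_union_le _ _
    _ ≤ 0 + ((n : ENNReal) * (ENNReal.ofReal (Real.exp (-ν * N))
            + ENNReal.ofReal (Real.exp (-ν * N)))
        + (n : ENNReal) * ENNReal.ofReal (Real.exp (-c0 * N))) := by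
        gcongr
        · exact le_of_eq hS0
        · refine le_trans (measure_biUnion_finset_le _ _) ?_
          have hcard : (Finset.Icc 1 n).card = n := by
            rw [Nat.card_Icc]; omega
          calc ∑ j ∈ Finset.Icc 1 n, P ({ω | ϑ j ω ∈ W} ∪ {ω | L < ‖ϑ j ω‖})
              ≤ ∑ _j ∈ Finset.Icc 1 n, (ENNReal.ofReal (Real.exp (-ν * N))
                + ENNReal.ofReal (Real.exp (-ν * N))) := by
                refine Finset.sum_le_sum fun j _ => ?_
                exact le_trans (measure_union_le _ _) (add_le_add (hWb j) (hEb j))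
            _ = (n : ENNReal) * _ := by
                rw [Finset.sum_const, hcard, nsmul_eq_mul]
        · refine le_trans (measure_biUnion_finset_le _ _) ?_
          calc ∑ j ∈ Finset.range n, P {ω | ‖ϑ j ω‖ ≤ L ∧ η / 2 ≤ ‖ϑ (j + 1) ω - ϑ j ω‖}
              ≤ ∑ _j ∈ Finset.range n, ENNReal.ofReal (Real.exp (-c0 * N)) :=
                Finset.sum_le_sum fun j _ => hBb j
            _ = (n : ENNReal) * _ := by
                rw [Finset.sum_const, Finset.card_range, nsmul_eq_mul]
    _ ≤ ENNReal.ofReal (3 * Real.exp (-m * N / 2)) := by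
        rw [zero_add]
        have h1 : (n : ENNReal) * (ENNReal.ofReal (Real.exp (-ν * N))
            + ENNReal.ofReal (Real.exp (-ν * N)))
            = ENNReal.ofReal ((n : ℝ) * (2 * Real.exp (-ν * N))) := by
          rw [← ENNReal.ofReal_add (by positivity) (by positivity),
            ← ENNReal.ofReal_natCast n, ← ENNReal.ofReal_mul (by positivity)]
          ring_nf
        have h2 : (n : ENNReal) * ENNReal.ofReal (Real.exp (-c0 * N))
            = ENNReal.ofReal ((n : ℝ) * Real.exp (-c0 * N)) := by
          rw [← ENNReal.ofReal_natCast n, ← ENNReal.ofReal_mul (by positivity)]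
        rw [h1, h2, ← ENNReal.ofReal_add (by positivity) (by positivity)]
        apply ENNReal.ofReal_le_ofReal
        have hNpos : (1 : ℝ) ≤ (N : ℝ) := by exact_mod_cast hN
        have e1 : K * Real.exp (-ν * N) ≤ Real.exp (-m * N / 2) := by
          rw [hK, ← Real.exp_add]
          apply Real.exp_le_exp.mpr
          nlinarith [hm1, hν, hNpos, hm0.le]
        have e2 : K * Real.exp (-c0 * N) ≤ Real.exp (-m * N / 2) := by
          rw [hK, ← Real.exp_add]
          apply Real.exp_le_exp.mpr
          nlinarith [hmc0, hNpos, hm0.le]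
        have p1 : (0:ℝ) < Real.exp (-ν * N) := Real.exp_pos _
        have p2 : (0:ℝ) < Real.exp (-c0 * N) := Real.exp_pos _
        nlinarith [mul_le_mul_of_nonneg_right hnK p1.le,
          mul_le_mul_of_nonneg_right hnK p2.le, e1, e2]
end
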